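/- In the free Lie algebra L on two generators over a field K, if f, g ∈ L satisfy [f, g] = 0 and g ≠ 0, then f = α·g for some scalar α ∈ K. -/

import Mathlib

noncomputable section

namespace FLBZ

set_option linter.unusedSectionVars false
set_option linter.unusedVariables false

variable {K : Type*} [Field K] [CharZero K]

local notation "Mw" => FreeMonoid (Fin 2)
local notation "AA" => MonoidAlgebra K Mw
local notation "LL" => FreeLieAlgebra K (Fin 2)

instance : DecidableEq Mw := inferInstanceAs (DecidableEq (List (Fin 2)))

/-! ### Word encoding -/

def e (w : Mw) : ℕ := Nat.ofDigits 2 (w.toList.map Fin.val)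

lemma ofDigits_inj : ∀ (L1 L2 : List ℕ), L1.length = L2.length → (∀ d ∈ L1, d < 2) →
    (∀ d ∈ L2, d < 2) → Nat.ofDigits 2 L1 = Nat.ofDigits 2 L2 → L1 = L2 := by
  intro L1
  induction L1 with
  | nil => intro L2 h _ _ _; cases L2 <;> simp_all
  | cons d L ih =>
    intro L2 hlen h1 h2 heq
    cases L2 with
    | nil => simp at hlen
    | cons d' L' =>
      simp only [Nat.ofDigits_cons] at heq
      have b1 : d < 2 := h1 d (by simp)
      have b2 : d' < 2 := h2 d' (by simp)
      have hd : d = d' ∧ Nat.ofDigits 2 L = Nat.ofDigits 2 L' := by omega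
      have := ih L' (by simpa using hlen) (fun x hx => h1 x (by simp [hx]))
        (fun x hx => h2 x (by simp [hx])) hd.2
      simp [hd.1, this]

lemma e_inj {w1 w2 : Mw} (hlen : w1.toList.length = w2.toList.length)
    (h : e w1 = e w2) : w1 = w2 := by
  have h3 := ofDigits_inj (w1.toList.map Fin.val) (w2.toList.map Fin.val)
    (by simpa using hlen) (by intro d hd; simp at hd; omega)
    (by intro d hd; simp at hd; omega) h
  have hinj : Function.Injective (Fin.val : Fin 2 → ℕ) := Fin.val_injective
  exact FreeMonoid.toList.injective (List.map_injective_iff.mpr hinj h3)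

def len (w : Mw) : ℕ := w.toList.length

lemma len_mul (u v : Mw) : len (u * v) = len u + len v := by
  simp [len, FreeMonoid.toList_mul]

lemma len_one : len (1 : Mw) = 0 := rfl

lemma len_eq_zero {w : Mw} : len w = 0 ↔ w = 1 := by
  constructor
  · intro h
    have : w.toList = [] := List.length_eq_zero_iff.mp h
    exact FreeMonoid.toList.injective this
  · intro h; rw [h]; rfl

/-! ### Homogeneity -/

def Hg (d : ℕ) (a : AA) : Prop := ∀ w ∈ a.coeff.support, len w = d

lemma Hg.add {d} {a b : AA} (ha : Hg d a) (hb : Hg d b) : Hg d (a + b) := by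
  intro w hw
  rw [MonoidAlgebra.coeff_add] at hw
  rcases Finset.mem_union.mp (Finsupp.support_add hw) with h | h
  exacts [ha w h, hb w h]

lemma Hg.smul {d} {a : AA} (c : K) (ha : Hg d a) : Hg d (c • a) := by
  intro w hw
  exact ha w (Finsupp.support_smul (by rwa [MonoidAlgebra.coeff_smul] at hw))

lemma Hg.neg {d} {a : AA} (ha : Hg d a) : Hg d (-a) := by
  intro w hw
  exact ha w (by rwa [MonoidAlgebra.coeff_neg, Finsupp.support_neg] at hw)

lemma Hg.sub {d} {a b : AA} (ha : Hg d a) (hb : Hg d b) : Hg d (a - b) := by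
  rw [sub_eq_add_neg]; exact ha.add hb.neg

lemma Hg.zero {d} : Hg d (0 : AA) := by intro w hw; simp at hw

lemma Hg.mul {d d'} {a b : AA} (ha : Hg d a) (hb : Hg d' b) : Hg (d + d') (a * b) := by
  intro w hw
  have := MonoidAlgebra.support_coeff_mul_subset a b hw
  rw [Finset.mem_mul] at this
  obtain ⟨s, hs, t, ht, rfl⟩ := this
  rw [len_mul, ha s hs, hb t ht]

lemma Hg.one : Hg 0 (1 : AA) := by
  intro w hw
  rw [MonoidAlgebra.one_def, MonoidAlgebra.coeff_single] at hw
  have := Finsupp.support_single_subset hw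
  simp only [Finset.mem_singleton] at this
  simp [this, len_one]

lemma Hg.pow {d} {a : AA} (ha : Hg d a) (k : ℕ) : Hg (k * d) (a ^ k) := by
  induction k with
  | zero => simpa using Hg.one
  | succ k ih =>
    have h2 := ih.mul ha
    rw [pow_succ]
    have h3 : (k + 1) * d = k * d + d := by ring
    rw [h3]
    exact h2

lemma append_cancel {s t wa wb : Mw} (h : s * t = wa * wb) (hlen : len s = len wa) :
    s = wa ∧ t = wb := by
  have h1 : s.toList ++ t.toList = wa.toList ++ wb.toList := by
    have := congrArg FreeMonoid.toList h
    simpa [FreeMonoid.toList_mul] using this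
  have := List.append_inj h1 hlen
  exact ⟨FreeMonoid.toList.injective this.1, FreeMonoid.toList.injective this.2⟩

lemma coeff_mul_homog {d d'} {a b : AA} (ha : Hg d a) (hb : Hg d' b) {wa wb : Mw}
    (hwa : len wa = d) (hwb : len wb = d') :
    (a * b).coeff (wa * wb) = a.coeff wa * b.coeff wb := by
  classical
  rw [MonoidAlgebra.coeff_mul, Finsupp.sum, Finset.sum_eq_single wa]
  · rw [Finsupp.sum, Finset.sum_eq_single wb]
    · simp
    · intro t ht hne
      rw [if_neg]
      intro hc
      exact hne (append_cancel hc rfl).2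
    · intro h
      simp [Finsupp.notMem_support_iff.mp h]
  · intro s hs hne
    rw [Finsupp.sum]
    apply Finset.sum_eq_zero
    intro t ht
    rw [if_neg]
    intro hc
    exact hne (append_cancel hc ((ha s hs).trans hwa.symm)).1
  · intro h
    simp [Finsupp.notMem_support_iff.mp h]

/-! ### Lemma 1 -/

lemma prop_of_commute_homog_aux {d : ℕ} {b : AA} (hb : Hg d b) (hbne : b ≠ 0) :
    ∀ (V : ℕ) (a : AA), (∀ w ∈ a.coeff.support, e w < V) → Hg d a → a * b = b * a →
    ∃ c : K, a = c • b := by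
  intro V
  induction V using Nat.strong_induction_on with
  | _ V ih =>
    intro a hbound ha hcomm
    by_cases haz : a = 0
    · exact ⟨0, by simp [haz]⟩
    obtain ⟨wa, hwa, hwamax⟩ :=
      Finset.exists_max_image a.coeff.support e
        (Finsupp.support_nonempty_iff.mpr (by simpa using haz))
    obtain ⟨wb, hwb, hwbmax⟩ :=
      Finset.exists_max_image b.coeff.support e
        (Finsupp.support_nonempty_iff.mpr (by simpa using hbne))
    have hcoeff : b.coeff wa * a.coeff wb = a.coeff wa * b.coeff wb := by
      have h1 := coeff_mul_homog (d := d) (d' := d) ha hb (wa := wa) (wb := wb)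
        (ha wa hwa) (hb wb hwb)
      have h2 := coeff_mul_homog (d := d) (d' := d) hb ha (wa := wa) (wb := wb)
        (ha wa hwa) (hb wb hwb)
      rw [hcomm] at h1
      rw [h1] at h2
      exact h2.symm
    have hane : a.coeff wa ≠ 0 := Finsupp.mem_support_iff.mp hwa
    have hbne' : b.coeff wb ≠ 0 := Finsupp.mem_support_iff.mp hwb
    have hprod : b.coeff wa * a.coeff wb ≠ 0 := by rw [hcoeff]; exact mul_ne_zero hane hbne'
    have hbwa : wa ∈ b.coeff.support := Finsupp.mem_support_iff.mpr (by
      intro h; rw [h, zero_mul] at hprod; exact hprod rfl)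
    have hawb : wb ∈ a.coeff.support := Finsupp.mem_support_iff.mpr (by
      intro h; rw [h, mul_zero] at hprod; exact hprod rfl)
    have hee : e wa = e wb := le_antisymm (hwbmax wa hbwa) (hwamax wb hawb)
    have hww : wa = wb := e_inj (by
      have := ha wa hwa; have := hb wb hwb
      simp only [len] at *; omega) hee
    subst hww
    set c := a.coeff wa / b.coeff wa with hc
    have hbwa0 : b.coeff wa ≠ 0 := Finsupp.mem_support_iff.mp hbwa
    set a' := a - c • b with ha'
    by_cases ha'z : a' = 0
    · exact ⟨c, by rw [← sub_eq_zero]; exact ha'z⟩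
    have ha'hom : Hg d a' := ha.sub (hb.smul c)
    have ha'comm : a' * b = b * a' := by
      rw [ha', sub_mul, mul_sub, hcomm, smul_mul_assoc, mul_smul_comm]
    have hwa' : a'.coeff wa = 0 := by
      have h1 : a'.coeff wa = a.coeff wa - c * b.coeff wa := by
        rw [ha', MonoidAlgebra.coeff_sub, Finsupp.sub_apply, MonoidAlgebra.coeff_smul,
          Finsupp.smul_apply, smul_eq_mul]
      rw [h1, hc]
      field_simp
      simp
    have hbound' : ∀ w ∈ a'.coeff.support, e w < e wa := by
      intro w hw
      have hsub : w ∈ a.coeff.support ∪ b.coeff.support := by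
        rcases Finset.mem_union.mp (Finsupp.support_sub (f := a.coeff) (g := (c • b).coeff)
          (by rw [← MonoidAlgebra.coeff_sub]; exact hw)) with h | h
        · exact Finset.mem_union_left _ h
        · exact Finset.mem_union_right _
            (Finsupp.support_smul (by rw [MonoidAlgebra.coeff_smul] at h; exact h))
      have hle : e w ≤ e wa := by
        rcases Finset.mem_union.mp hsub with h | h
        exacts [hwamax w h, hwbmax w h]
      rcases lt_or_eq_of_le hle with h | h
      · exact h
      · exfalso
        have : w = wa := e_inj (by
          have := ha'hom w hw
          have := ha wa hwa
          simp only [len] at *; omega) h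
        rw [this] at hw
        exact Finsupp.mem_support_iff.mp hw hwa'
    have hVlt : e wa < V := hbound wa hwa
    obtain ⟨c', hc'⟩ := ih (e wa) hVlt a' hbound' ha'hom ha'comm
    refine ⟨c + c', ?_⟩
    have h2 : a = a' + c • b := by rw [ha']; abel
    rw [h2, hc', add_smul]
    abel

lemma prop_of_commute_homog {d : ℕ} {a b : AA} (ha : Hg d a) (hb : Hg d b) (hbne : b ≠ 0)
    (hcomm : a * b = b * a) : ∃ c : K, a = c • b := by
  obtain ⟨V, hV⟩ : ∃ V, ∀ w ∈ a.coeff.support, e w < V := by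
    rcases a.coeff.support.eq_empty_or_nonempty with h | h
    · exact ⟨1, by simp [h]⟩
    obtain ⟨w0, _, hmax⟩ := Finset.exists_max_image a.coeff.support e h
    exact ⟨e w0 + 1, fun w hw => Nat.lt_succ_of_le (hmax w hw)⟩
  exact prop_of_commute_homog_aux hb hbne V a hV ha hcomm

end FLBZ

namespace FLBZ2
open FreeLieAlgebra
open scoped TensorProduct
variable {K : Type*} [Field K] [CharZero K]
set_option linter.unusedSectionVars false
attribute [local instance 100] LieRing.ofAssociativeRing

local notation "Mw" => FreeMonoid (Fin 2)
local notation "AA" => MonoidAlgebra K Mw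
local notation "LL" => FreeLieAlgebra K (Fin 2)
open FLBZ

/-! ### The Lie homomorphism φ and generation -/

def gen (x : Fin 2) : AA := MonoidAlgebra.of K Mw (FreeMonoid.of x)

def phi : LL →ₗ⁅K⁆ AA := FreeLieAlgebra.lift K (fun x => gen (K := K) x)

lemma phi_of (x : Fin 2) : phi (of K x) = gen x := by
  simp [phi, lift_of_apply]

lemma phi_lie (u v : LL) : phi ⁅u, v⁆ = phi u * phi v - phi v * phi u := by
  rw [LieHom.map_lie]; rfl

lemma mem_of_lieSubalgebra (S : LieSubalgebra K LL) (hS : ∀ x, of K x ∈ S) (f : LL) :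
    f ∈ S := by
  have h1 : (S.incl.comp (lift K (fun x => (⟨of K x, hS x⟩ : S)))) = LieHom.id := by
    apply FreeLieAlgebra.hom_ext
    intro x
    simp [lift_of_apply]
  have h2 := congrArg (fun F => F f) h1
  simp only [LieHom.comp_apply, LieHom.id_apply] at h2
  rw [← h2]
  exact ((lift K fun x => (⟨of K x, hS x⟩ : S)) f).2

/-! ### Positive support -/

def Pos (a : AA) : Prop := ∀ w ∈ a.coeff.support, w ≠ 1

lemma Pos.add {a b : AA} (ha : Pos a) (hb : Pos b) : Pos (a + b) := by
  intro w hw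
  rw [MonoidAlgebra.coeff_add] at hw
  rcases Finset.mem_union.mp (Finsupp.support_add hw) with h | h
  exacts [ha w h, hb w h]

lemma Pos.smul {a : AA} (c : K) (ha : Pos a) : Pos (c • a) :=
  fun w hw => ha w (Finsupp.support_smul (by rwa [MonoidAlgebra.coeff_smul] at hw))

lemma Pos.zero : Pos (0 : AA) := fun w hw => by simp at hw

lemma Pos.neg {a : AA} (ha : Pos a) : Pos (-a) :=
  fun w hw => ha w (by rwa [MonoidAlgebra.coeff_neg, Finsupp.support_neg] at hw)

lemma Pos.sub {a b : AA} (ha : Pos a) (hb : Pos b) : Pos (a - b) := by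
  rw [sub_eq_add_neg]; exact ha.add hb.neg

lemma Pos.mul_right {a b : AA} (hb : Pos b) : Pos (a * b) := by
  intro w hw
  have hmem := MonoidAlgebra.support_coeff_mul_subset a b hw
  rw [Finset.mem_mul] at hmem
  obtain ⟨s, hs, t, ht, rfl⟩ := hmem
  intro hc
  have h1 : len s + len t = 0 := by rw [← len_mul, hc, len_one]
  have h2 : len t ≠ 0 := fun h => hb t ht (len_eq_zero.mp h)
  omega

lemma Pos.mul_left {a b : AA} (ha : Pos a) : Pos (a * b) := by
  intro w hw
  have hmem := MonoidAlgebra.support_coeff_mul_subset a b hw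
  rw [Finset.mem_mul] at hmem
  obtain ⟨s, hs, t, ht, rfl⟩ := hmem
  intro hc
  have h1 : len s + len t = 0 := by rw [← len_mul, hc, len_one]
  have h2 : len s ≠ 0 := fun h => ha s hs (len_eq_zero.mp h)
  omega

/-- Generic induction principle over the free Lie algebra. -/
lemma lie_pred_induction (p : LL → Prop)
    (hof : ∀ x, p (of K x))
    (h0 : p 0) (hadd : ∀ a b, p a → p b → p (a + b))
    (hsmul : ∀ (c : K) a, p a → p (c • a))
    (hlie : ∀ a b, p a → p b → p ⁅a, b⁆) : ∀ f, p f := by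
  intro f
  let S : LieSubalgebra K LL :=
    { carrier := {a | p a}
      add_mem' := fun {a b} ha hb => hadd a b ha hb
      zero_mem' := h0
      smul_mem' := fun c a ha => hsmul c a ha
      lie_mem' := fun {a b} ha hb => hlie a b ha hb }
  exact mem_of_lieSubalgebra S hof f

lemma Pos_phi (u : LL) : Pos (phi (K := K) u) := by
  refine lie_pred_induction (fun u => Pos (phi u)) ?_ ?_ ?_ ?_ ?_ u
  · intro x
    rw [phi_of]
    intro w hw
    rw [gen, MonoidAlgebra.of_apply, MonoidAlgebra.coeff_single] at hw
    have hs := Finsupp.support_single_subset hw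
    simp only [Finset.mem_singleton] at hs
    rw [hs]
    intro hc
    have := congrArg FreeMonoid.toList hc
    simp [FreeMonoid.toList_of, FreeMonoid.toList_one] at this
  · simp only [map_zero]; exact Pos.zero
  · intro a b ha hb
    rw [map_add]; exact ha.add hb
  · intro c a ha
    rw [map_smul]; exact ha.smul c
  · intro a b ha hb
    rw [phi_lie]
    exact Pos.sub (Pos.mul_right hb) (Pos.mul_right ha)

/-! ### Dynkin–Specht–Wever retraction -/

def rr : List (Fin 2) → FreeLieAlgebra K (Fin 2)
  | [] => 0
  | [x] => of K x
  | x :: y :: l => ⁅of K x, rr (y :: l)⁆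

def theta : AA →ₗ[K] LL :=
  Finsupp.lsum K (fun w => LinearMap.toSpanSingleton K LL (rr w.toList)) ∘ₗ
    (MonoidAlgebra.coeffLinearEquiv K).toLinearMap

lemma theta_single (w : Mw) (c : K) :
    theta (MonoidAlgebra.single w c) = c • rr (K := K) w.toList := by
  show (Finsupp.lsum K (fun w => LinearMap.toSpanSingleton K LL (rr (K := K) w.toList)))
    (Finsupp.single w c) = _
  rw [Finsupp.lsum_single, LinearMap.toSpanSingleton_apply]

lemma gen_mul_single (x : Fin 2) (w : Mw) (c : K) :
    gen (K := K) x * MonoidAlgebra.single w c = MonoidAlgebra.single (FreeMonoid.of x * w) c := by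
  show MonoidAlgebra.single (FreeMonoid.of x) 1 * MonoidAlgebra.single w c = _
  rw [MonoidAlgebra.single_mul_single, one_mul]

lemma rr_cons (x : Fin 2) (w : Mw) (hw : w ≠ 1) :
    rr (K := K) ((FreeMonoid.of x * w).toList) = ⁅of K x, rr w.toList⁆ := by
  have h1 : (FreeMonoid.of x * w).toList = x :: w.toList := by
    rw [FreeMonoid.toList_mul, FreeMonoid.toList_of]
    rfl
  rw [h1]
  cases hl : w.toList with
  | nil => exact absurd (FreeMonoid.toList.injective hl) hw
  | cons y l => rw [rr]

lemma theta_gen_mul (x : Fin 2) (a : AA) (ha : Pos a) :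
    theta (gen (K := K) x * a) = ⁅of K x, theta a⁆ := by
  induction a using MonoidAlgebra.induction with
  | zero => simp
  | single_add w c f hwf hc ih =>
    have hsupp : ((MonoidAlgebra.single w c : AA) + f).coeff.support = {w} ∪ f.coeff.support := by
      rw [MonoidAlgebra.coeff_add, MonoidAlgebra.coeff_single, Finsupp.support_add_eq, Finsupp.support_single_ne_zero w hc]
      rw [Finsupp.support_single_ne_zero w hc, Finset.disjoint_left]
      intro u hu
      rw [Finset.mem_singleton] at hu
      rw [hu]
      exact hwf
    have hw1 : w ≠ 1 := ha w (by rw [hsupp]; exact Finset.mem_union_left _ (by simp))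
    have hPf : Pos f := by
      intro w' hw'
      exact ha w' (by rw [hsupp]; exact Finset.mem_union_right _ hw')
    rw [mul_add, map_add, map_add, gen_mul_single, theta_single, theta_single,
      rr_cons x w hw1, ih hPf, lie_add]
    congr 1
    exact (lie_smul c (of K x) (rr (FreeMonoid.toList w))).symm

lemma theta_phi_mul (u : LL) : ∀ (a : AA), Pos a →
    theta (phi (K := K) u * a) = ⁅u, theta a⁆ := by
  refine lie_pred_induction
    (fun u => ∀ (a : AA), Pos a → theta (phi (K := K) u * a) = ⁅u, theta a⁆)
    ?_ ?_ ?_ ?_ ?_ u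
  · intro x a ha
    rw [phi_of]
    exact theta_gen_mul x a ha
  · intro a ha
    simp
  · intro a b hA hB c hc
    rw [map_add, add_mul, map_add, hA c hc, hB c hc, add_lie]
  · intro k a hA c hc
    rw [map_smul, smul_mul_assoc, map_smul, hA c hc, smul_lie]
  · intro a b hA hB c hc
    rw [phi_lie, sub_mul, map_sub, mul_assoc, mul_assoc,
      hA _ (Pos.mul_right hc), hB _ (Pos.mul_right hc),
      hB c hc, hA c hc, lie_lie]

/-! ### The Euler operator N on L -/

def NN : LL →ₗ[K] LL := theta ∘ₗ (phi (K := K)).toLinearMap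

lemma NN_of (x : Fin 2) : NN (of K x) = of K x := by
  show theta (phi (of K x)) = of K x
  rw [phi_of]
  show theta (MonoidAlgebra.single (FreeMonoid.of x) 1) = of K x
  rw [theta_single]
  have : (FreeMonoid.of x).toList = [x] := rfl
  rw [this, rr, one_smul]

lemma NN_lie (u v : LL) : NN ⁅u, v⁆ = ⁅NN u, v⁆ + ⁅u, NN v⁆ := by
  show theta (phi ⁅u, v⁆) = _
  rw [phi_lie, map_sub, theta_phi_mul u _ (Pos_phi v), theta_phi_mul v _ (Pos_phi u)]
  show ⁅u, NN v⁆ - ⁅v, NN u⁆ = ⁅NN u, v⁆ + ⁅u, NN v⁆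
  rw [← lie_skew v (NN u)]
  abel

/-! ### The Euler derivation D on A -/

def DD : AA →ₗ[K] AA :=
  (MonoidAlgebra.coeffLinearEquiv K).symm.toLinearMap ∘ₗ
    Finsupp.lsum K (fun w => (len w : K) • Finsupp.lsingle w) ∘ₗ
    (MonoidAlgebra.coeffLinearEquiv K).toLinearMap

lemma DD_single (w : Mw) (c : K) :
    DD (MonoidAlgebra.single w c) = (len w : K) • MonoidAlgebra.single w c := by
  show (MonoidAlgebra.coeffLinearEquiv K).symm
    (Finsupp.lsum K (fun w => (len w : K) • Finsupp.lsingle (R := K) w) (Finsupp.single w c)) = _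
  rw [Finsupp.lsum_single]
  rfl

lemma DD_apply (a : AA) (w : Mw) : (DD a).coeff w = (len w : K) * a.coeff w := by
  induction a using MonoidAlgebra.induction_linear with
  | zero => simp
  | add f g hf hg =>
    rw [map_add, MonoidAlgebra.coeff_add, Finsupp.add_apply, hf, hg, MonoidAlgebra.coeff_add,
      Finsupp.add_apply, mul_add]
  | single s c =>
    rw [DD_single]
    by_cases h : s = w
    · subst h; simp [Finsupp.single_apply]
    · simp [Finsupp.single_apply, h]

lemma DD_mul (a b : AA) : DD (a * b) = DD a * b + a * DD b := by
  induction a using MonoidAlgebra.induction_linear with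
  | zero => simp
  | add f g hf hg =>
    rw [add_mul, map_add, map_add, hf, hg, add_mul, add_mul]
    abel
  | single s c =>
    induction b using MonoidAlgebra.induction_linear with
    | zero => simp
    | add f g hf hg =>
      rw [mul_add, map_add, map_add, hf, hg, mul_add, mul_add]
      abel
    | single t d =>
      show DD ((MonoidAlgebra.single s c) * (MonoidAlgebra.single t d)) = _
      rw [MonoidAlgebra.single_mul_single, DD_single, DD_single, DD_single,
        smul_mul_assoc, mul_smul_comm, MonoidAlgebra.single_mul_single, ← add_smul]
      rw [len_mul]
      push_cast
      ring_nf

lemma phiNN_eq_DDphi (u : LL) : phi (K := K) (NN u) = DD (phi u) := by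
  refine lie_pred_induction (fun u => phi (K := K) (NN u) = DD (phi u)) ?_ ?_ ?_ ?_ ?_ u
  · intro x
    rw [NN_of, phi_of]
    show gen (K := K) x = DD (MonoidAlgebra.single (FreeMonoid.of x) 1)
    rw [DD_single]
    have hl : len (FreeMonoid.of x) = 1 := rfl
    rw [hl, Nat.cast_one, one_smul]
    rfl
  · simp
  · intro a b ha hb
    rw [map_add, map_add phi, ha, hb, map_add phi]
    exact (map_add DD (phi a) (phi b)).symm
  · intro c a ha
    rw [map_smul, map_smul phi, ha, map_smul phi]
    exact (map_smul DD c (phi a)).symm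
  · intro a b ha hb
    rw [NN_lie, map_add phi, phi_lie, phi_lie, phi_lie]
    rw [map_sub, DD_mul (phi a) (phi b), DD_mul (phi b) (phi a), ha, hb]
    abel

/-- an eigenvector of N with eigenvalue n maps to a homogeneous element of degree n. -/
lemma Hg_of_eigen {n : ℕ} {u : LL} (h : NN u = (n : K) • u) : Hg n (phi (K := K) u) := by
  intro w hw
  have h1 : DD (phi u) = (n : K) • phi u := by
    rw [← phiNN_eq_DDphi, h, map_smul phi]
  have h2 := congrArg (fun a => a.coeff w) h1
  simp only [MonoidAlgebra.coeff_smul, Finsupp.smul_apply, smul_eq_mul] at h2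
  rw [DD_apply] at h2
  have h3 : (phi (K := K) u).coeff w ≠ 0 := Finsupp.mem_support_iff.mp hw
  have h4 : (len w : K) = (n : K) := by
    rcases mul_eq_mul_right_iff.mp h2 with h | h
    · exact h
    · exact absurd h h3
  exact_mod_cast h4

/-- eigenvectors with positive eigenvalue inject under φ. -/
lemma eigen_inj {n : ℕ} {u : LL} (hn : 1 ≤ n) (h : NN u = (n : K) • u)
    (hz : phi (K := K) u = 0) : u = 0 := by
  have h1 : NN u = theta (phi (K := K) u) := rfl
  rw [hz, map_zero] at h1
  rw [h1] at h
  have hn0 : (n : K) ≠ 0 := Nat.cast_ne_zero.mpr (by omega)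
  have := (smul_eq_zero.mp h.symm).resolve_left hn0
  exact this

lemma sum_lie' {ι : Type} (s : Finset ι) (f : ι → LL) (y : LL) :
    ⁅∑ i ∈ s, f i, y⁆ = ∑ i ∈ s, ⁅f i, y⁆ := by
  classical
  induction s using Finset.induction_on with
  | empty => simp
  | insert _ _ hx ih =>
    rw [Finset.sum_insert hx, Finset.sum_insert hx, add_lie, ih]

lemma lie_sum' {ι : Type} (s : Finset ι) (f : ι → LL) (y : LL) :
    ⁅y, ∑ i ∈ s, f i⁆ = ∑ i ∈ s, ⁅y, f i⁆ := by
  classical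
  induction s using Finset.induction_on with
  | empty => simp
  | insert _ _ hx ih =>
    rw [Finset.sum_insert hx, Finset.sum_insert hx, lie_add, ih]

/-! ### Decomposition into homogeneous components -/

def Dc (f : LL) : Prop :=
  ∃ (s : Finset ℕ) (F : ℕ → LL), f = ∑ n ∈ s, F n ∧
    ∀ n ∈ s, 1 ≤ n ∧ NN (F n) = (n : K) • F n

lemma Dc_all (f : LL) : Dc (K := K) f := by
  refine lie_pred_induction (fun f => Dc (K := K) f) ?_ ?_ ?_ ?_ ?_ f
  · intro x
    refine ⟨{1}, fun _ => of K x, by simp, ?_⟩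
    intro n hn
    rw [Finset.mem_singleton] at hn
    subst hn
    simp [NN_of]
  · exact ⟨∅, fun _ => 0, by simp, by simp⟩
  · rintro a b ⟨s, F, rfl, hF⟩ ⟨t, G, rfl, hG⟩
    refine ⟨s ∪ t, fun n => (if n ∈ s then F n else 0) + (if n ∈ t then G n else 0), ?_, ?_⟩
    · rw [Finset.sum_add_distrib]
      rw [Finset.sum_ite_mem, Finset.sum_ite_mem,
        Finset.union_inter_cancel_left, Finset.union_inter_cancel_right]
    · intro n hn
      constructor
      · rcases Finset.mem_union.mp hn with h | h
        exacts [(hF n h).1, (hG n h).1]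
      · rw [map_add]
        by_cases h1 : n ∈ s <;> by_cases h2 : n ∈ t <;>
          simp only [h1, h2, if_true, if_false, map_zero, smul_add, add_zero, zero_add,
            smul_zero]
        · rw [(hF n h1).2, (hG n h2).2]
        · rw [(hF n h1).2]
        · rw [(hG n h2).2]
  · rintro c a ⟨s, F, rfl, hF⟩
    refine ⟨s, fun n => c • F n, by rw [Finset.smul_sum], ?_⟩
    intro n hn
    refine ⟨(hF n hn).1, ?_⟩
    rw [map_smul, (hF n hn).2, smul_comm]
  · rintro a b ⟨s, F, rfl, hF⟩ ⟨t, G, rfl, hG⟩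
    refine ⟨(s ×ˢ t).image (fun p => p.1 + p.2),
      fun k => ∑ p ∈ (s ×ˢ t).filter (fun p => p.1 + p.2 = k), ⁅F p.1, G p.2⁆, ?_, ?_⟩
    · rw [Finset.sum_fiberwise_of_maps_to (fun p hp => Finset.mem_image_of_mem _ hp)]
      rw [Finset.sum_product, sum_lie']
      apply Finset.sum_congr rfl
      intro n hn
      rw [lie_sum']
    · intro k hk
      obtain ⟨p, hp, hpk⟩ := Finset.mem_image.mp hk
      have h1 : 1 ≤ p.1 := (hF p.1 (Finset.mem_product.mp hp).1).1
      refine ⟨by omega, ?_⟩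
      rw [map_sum, Finset.smul_sum]
      apply Finset.sum_congr rfl
      intro q hq
      rw [Finset.mem_filter] at hq
      have hq1 := Finset.mem_product.mp hq.1
      rw [NN_lie, (hF q.1 hq1.1).2, (hG q.2 hq1.2).2, smul_lie,
        lie_smul (q.2 : K) (F q.1) (G q.2), ← hq.2]
      rw [← add_smul]
      push_cast
      ring_nf

lemma decomp (f : LL) : ∃ (s : Finset ℕ) (F : ℕ → LL), f = ∑ n ∈ s, F n ∧
    ∀ n ∈ s, F n ≠ 0 ∧ 1 ≤ n ∧ NN (F n) = (n : K) • F n := by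
  classical
  obtain ⟨s, F, rfl, hF⟩ := Dc_all (K := K) f
  refine ⟨s.filter (fun n => F n ≠ 0), F, ?_, ?_⟩
  · exact (Finset.sum_filter_ne_zero s).symm
  · intro n hn
    rw [Finset.mem_filter] at hn
    exact ⟨hn.2, (hF n hn.1).1, (hF n hn.1).2⟩

/-! ### Graded projections -/

open scoped Classical in
def Pd (d : ℕ) : AA →ₗ[K] AA :=
  (MonoidAlgebra.coeffLinearEquiv K).symm.toLinearMap ∘ₗ
    Finsupp.lsum K (fun w => if len w = d then Finsupp.lsingle w else 0) ∘ₗ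
    (MonoidAlgebra.coeffLinearEquiv K).toLinearMap

lemma Pd_apply (d : ℕ) (a : AA) (w : Mw) :
    (Pd d a).coeff w = if len w = d then a.coeff w else 0 := by
  classical
  induction a using MonoidAlgebra.induction_linear with
  | zero => simp
  | add f g hf hg =>
    rw [map_add, MonoidAlgebra.coeff_add, Finsupp.add_apply, hf, hg, MonoidAlgebra.coeff_add,
      Finsupp.add_apply]
    split <;> simp
  | single s c =>
    show ((MonoidAlgebra.coeffLinearEquiv K).symm (Finsupp.lsum K
      (fun w => if len w = d then Finsupp.lsingle (R := K) w else 0) (Finsupp.single s c))).coeff w = _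
    rw [Finsupp.lsum_single]
    by_cases h : len s = d
    · rw [if_pos h]
      by_cases hsw : s = w
      · subst hsw
        rw [if_pos h]
        rfl
      · show (Finsupp.single s c : Mw →₀ K) w = _
        rw [Finsupp.single_apply, if_neg hsw]
        split <;> simp [Finsupp.single_apply, hsw]
    · rw [if_neg h]
      show (0 : Mw →₀ K) w = _
      by_cases hsw : s = w
      · subst hsw
        rw [if_neg h]
        rfl
      · rw [Finsupp.coe_zero, Pi.zero_apply]
        split <;> simp [Finsupp.single_apply, hsw]

lemma Pd_homog_eq {d : ℕ} {a : AA} (ha : Hg d a) : Pd d a = a := by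
  ext w
  rw [Pd_apply]
  by_cases h : len w = d
  · rw [if_pos h]
  · rw [if_neg h]
    by_cases hw : w ∈ a.coeff.support
    · exact absurd (ha w hw) h
    · rw [Finsupp.notMem_support_iff.mp hw]

lemma Pd_homog_ne {d d' : ℕ} {a : AA} (ha : Hg d' a) (hne : d' ≠ d) : Pd d a = 0 := by
  ext w
  rw [Pd_apply, MonoidAlgebra.coeff_zero, Finsupp.coe_zero, Pi.zero_apply]
  by_cases h : len w = d
  · rw [if_pos h]
    by_cases hw : w ∈ a.coeff.support
    · exact absurd ((ha w hw).symm.trans h) hne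
    · exact Finsupp.notMem_support_iff.mp hw
  · rw [if_neg h]

/-! ### Coproduct -/

def Delta : AA →ₐ[K] (AA ⊗[K] AA) :=
  MonoidAlgebra.lift K (AA ⊗[K] AA) Mw
    (FreeMonoid.lift (fun x => gen (K := K) x ⊗ₜ[K] (1 : AA) + (1 : AA) ⊗ₜ[K] gen (K := K) x))

lemma Delta_gen (x : Fin 2) :
    Delta (K := K) (gen (K := K) x) = gen (K := K) x ⊗ₜ[K] (1 : AA) + (1 : AA) ⊗ₜ[K] gen (K := K) x := by
  rw [Delta, gen]
  rw [MonoidAlgebra.lift_of]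
  rw [FreeMonoid.lift_eval_of]
  rfl

lemma Delta_prim (u : LL) :
    Delta (K := K) (phi (K := K) u) = phi u ⊗ₜ[K] (1 : AA) + (1 : AA) ⊗ₜ[K] phi u := by
  refine lie_pred_induction
    (fun u => Delta (K := K) (phi (K := K) u) = phi u ⊗ₜ[K] (1 : AA) + (1 : AA) ⊗ₜ[K] phi u) ?_ ?_ ?_ ?_ ?_ u
  · intro x
    rw [phi_of, Delta_gen]
  · simp
  · intro a b ha hb
    rw [map_add phi, map_add, ha, hb, TensorProduct.add_tmul, TensorProduct.tmul_add]
    abel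
  · intro c a ha
    rw [map_smul phi, map_smul, ha]
    simp [TensorProduct.smul_tmul', TensorProduct.tmul_smul, smul_add]
  · intro a b ha hb
    rw [phi_lie, map_sub, map_mul, map_mul, ha, hb]
    rw [add_mul, mul_add, mul_add, add_mul, mul_add, mul_add]
    simp only [Algebra.TensorProduct.tmul_mul_tmul, one_mul, mul_one]
    rw [TensorProduct.sub_tmul, TensorProduct.tmul_sub]
    abel

/-! ### No commuting primitives of different degrees -/

lemma tensor_ne_zero {u z : AA} (hu : u ≠ 0) (hz : z ≠ 0) : u ⊗ₜ[K] z ≠ 0 := by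
  obtain ⟨w0, hw0⟩ := (Finsupp.support_nonempty_iff (f := u.coeff)).mpr (by simpa using hu) |>.exists_mem
  intro hc
  have hq := congrArg ((TensorProduct.lid K AA).toLinearMap.comp
    (TensorProduct.map (Finsupp.lapply w0 ∘ₗ (MonoidAlgebra.coeffLinearEquiv K).toLinearMap)
      LinearMap.id)) hc
  simp only [LinearMap.comp_apply, TensorProduct.map_tmul, LinearMap.id_apply, map_zero,
    LinearEquiv.coe_toLinearMap, TensorProduct.lid_tmul] at hq
  have : (u.coeff w0 : K) • z = 0 := hq
  rcases smul_eq_zero.mp this with h | h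
  · exact Finsupp.mem_support_iff.mp hw0 h
  · exact hz h

lemma no_commute_prim {m n : ℕ} (hm : 1 ≤ m) (hn : 1 ≤ n) (hnm : ¬ (n ∣ m))
    {u v : AA} (hu : Hg m u) (hv : Hg n v) (hune : u ≠ 0) (hvne : v ≠ 0)
    (hpu : Delta (K := K) u = u ⊗ₜ[K] (1 : AA) + (1 : AA) ⊗ₜ[K] u)
    (hpv : Delta (K := K) v = v ⊗ₜ[K] (1 : AA) + (1 : AA) ⊗ₜ[K] v)
    (hcomm : u * v = v * u) : False := by
  classical
  have hC : Commute u v := hcomm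
  have hpowcomm : u ^ n * v ^ m = v ^ m * u ^ n := (hC.pow_pow n m)
  have hun : Hg (n * m) (u ^ n) := hu.pow n
  have hvm : Hg (n * m) (v ^ m) := by
    have := hv.pow m
    rwa [mul_comm] at this
  have hvmne : v ^ m ≠ 0 := pow_ne_zero m hvne
  obtain ⟨c, hc⟩ := prop_of_commute_homog hun hvm hvmne hpowcomm
  -- expand coproducts
  have hTcomm : Commute (u ⊗ₜ[K] (1 : AA)) ((1 : AA) ⊗ₜ[K] u) := by
    show _ = _
    simp [Algebra.TensorProduct.tmul_mul_tmul]
  have hTcommv : Commute (v ⊗ₜ[K] (1 : AA)) ((1 : AA) ⊗ₜ[K] v) := by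
    show _ = _
    simp [Algebra.TensorProduct.tmul_mul_tmul]
  have hDu : Delta (K := K) (u ^ n) =
      ∑ k ∈ Finset.range (n + 1), (n.choose k) • ((u ^ k) ⊗ₜ[K] (u ^ (n - k))) := by
    rw [map_pow, hpu, hTcomm.add_pow]
    apply Finset.sum_congr rfl
    intro k hk
    rw [Algebra.TensorProduct.tmul_pow, Algebra.TensorProduct.tmul_pow, one_pow, one_pow,
      Algebra.TensorProduct.tmul_mul_tmul, one_mul, mul_one]
    rw [← (Nat.cast_commute (n.choose k) ((u ^ k) ⊗ₜ[K] (u ^ (n - k)))).eq, ← nsmul_eq_mul]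
  have hDv : Delta (K := K) (v ^ m) =
      ∑ j ∈ Finset.range (m + 1), (m.choose j) • ((v ^ j) ⊗ₜ[K] (v ^ (m - j))) := by
    rw [map_pow, hpv, hTcommv.add_pow]
    apply Finset.sum_congr rfl
    intro j hj
    rw [Algebra.TensorProduct.tmul_pow, Algebra.TensorProduct.tmul_pow, one_pow, one_pow,
      Algebra.TensorProduct.tmul_mul_tmul, one_mul, mul_one]
    rw [← (Nat.cast_commute (m.choose j) ((v ^ j) ⊗ₜ[K] (v ^ (m - j)))).eq, ← nsmul_eq_mul]
  set Pi := TensorProduct.map (Pd (K := K) m) (Pd (K := K) ((n - 1) * m)) with hPi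
  have hL : Pi (Delta (K := K) (u ^ n)) = n • (u ⊗ₜ[K] (u ^ (n - 1))) := by
    rw [hDu, map_sum]
    rw [Finset.sum_eq_single 1]
    · rw [map_nsmul, hPi, TensorProduct.map_tmul, pow_one, Pd_homog_eq hu,
        Pd_homog_eq (hu.pow (n - 1)), Nat.choose_one_right]
    · intro k hk hkne
      rw [map_nsmul, hPi, TensorProduct.map_tmul]
      rw [Pd_homog_ne (hu.pow k) (by
        intro hc2
        have h1 : k * m = 1 * m := by rw [hc2, one_mul]
        exact hkne (Nat.eq_of_mul_eq_mul_right (by omega) h1))]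
      rw [TensorProduct.zero_tmul, smul_zero]
    · intro h
      exact absurd (Finset.mem_range.mpr (by omega)) h
  have hR : Pi (Delta (K := K) (v ^ m)) = 0 := by
    rw [hDv, map_sum]
    apply Finset.sum_eq_zero
    intro j hj
    rw [map_nsmul, hPi, TensorProduct.map_tmul]
    rw [Pd_homog_ne (hv.pow j) (by
      intro hc2
      exact hnm ⟨j, by rw [← hc2]; ring⟩)]
    rw [TensorProduct.zero_tmul, smul_zero]
  have hzero : (n : K) • (u ⊗ₜ[K] (u ^ (n - 1))) = 0 := by
    have h1 : Pi (Delta (K := K) (u ^ n)) = Pi (Delta (K := K) (c • v ^ m)) := by rw [hc]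
    rw [map_smul, map_smul, hR, smul_zero, hL] at h1
    rw [Nat.cast_smul_eq_nsmul]
    exact h1
  have hne : u ⊗ₜ[K] (u ^ (n - 1)) ≠ 0 :=
    tensor_ne_zero hune (pow_ne_zero _ hune)
  have hn0 : (n : K) ≠ 0 := Nat.cast_ne_zero.mpr (by omega)
  exact hne ((smul_eq_zero.mp hzero).resolve_left hn0)

/-! ### Main theorem -/

lemma main_aux (g : LL) (hg : g ≠ 0) :
    ∀ (B : ℕ) (f : LL), (∃ (s : Finset ℕ) (F : ℕ → LL), f = ∑ n ∈ s, F n ∧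
      ∀ n ∈ s, F n ≠ 0 ∧ 1 ≤ n ∧ n ≤ B ∧ NN (F n) = (n : K) • F n) →
      ⁅f, g⁆ = 0 → ∃ α : K, f = α • g := by
  classical
  obtain ⟨t, G, hgsum, hG⟩ := decomp (K := K) g
  have htne : t.Nonempty := by
    by_contra h
    rw [Finset.not_nonempty_iff_eq_empty] at h
    rw [h, Finset.sum_empty] at hgsum
    exact hg hgsum
  set Ng := t.max' htne with hNgdef
  have hNgt : Ng ∈ t := t.max'_mem htne
  have hGN := hG Ng hNgt
  have hvN : phi (K := K) (G Ng) ≠ 0 := by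
    intro hc
    exact hGN.1 (eigen_inj hGN.2.1 hGN.2.2 hc)
  have hvNh : Hg Ng (phi (K := K) (G Ng)) := Hg_of_eigen hGN.2.2
  intro B
  induction B using Nat.strong_induction_on with
  | _ B ih =>
    rintro f ⟨s, F, rfl, hF⟩ hfg
    rcases Finset.eq_empty_or_nonempty s with hsemp | hsne
    · exact ⟨0, by simp [hsemp]⟩
    set M0 := s.max' hsne with hM0def
    have hM0s : M0 ∈ s := s.max'_mem hsne
    have hFM := hF M0 hM0s
    have huM : phi (K := K) (F M0) ≠ 0 := by
      intro hc
      exact hFM.1 (eigen_inj hFM.2.1 hFM.2.2.2 hc)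
    have huMh : Hg M0 (phi (K := K) (F M0)) := Hg_of_eigen hFM.2.2.2
    -- extract the top-degree bracket
    have hX : (∑ n ∈ s, phi (K := K) (F n)) * (∑ p ∈ t, phi (K := K) (G p))
        - (∑ p ∈ t, phi (K := K) (G p)) * (∑ n ∈ s, phi (K := K) (F n)) = 0 := by
      have h0 : phi (K := K) ⁅(∑ n ∈ s, F n), g⁆ = 0 := by rw [hfg, map_zero phi]
      rw [phi_lie] at h0
      have h1 : phi (K := K) (∑ n ∈ s, F n) = ∑ n ∈ s, phi (K := K) (F n) := by
        rw [← LieHom.coe_toLinearMap, map_sum]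
      have h2 : phi (K := K) g = ∑ p ∈ t, phi (K := K) (G p) := by
        rw [hgsum, ← LieHom.coe_toLinearMap, map_sum]
      rw [h1, h2] at h0
      exact h0
    have hX2 : ∑ n ∈ s, ∑ p ∈ t,
        (phi (K := K) (F n) * phi (K := K) (G p) - phi (K := K) (G p) * phi (K := K) (F n))
        = 0 := by
      rw [← hX]
      rw [Finset.sum_mul_sum, Finset.sum_mul_sum]
      rw [Finset.sum_comm (s := t) (t := s)]
      rw [← Finset.sum_sub_distrib]
      apply Finset.sum_congr rfl
      intro n hn
      rw [← Finset.sum_sub_distrib]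
    have hkey : phi (K := K) (F M0) * phi (K := K) (G Ng)
        - phi (K := K) (G Ng) * phi (K := K) (F M0) = 0 := by
      have h3 := congrArg (Pd (K := K) (M0 + Ng)) hX2
      rw [map_zero, map_sum] at h3
      rw [Finset.sum_eq_single_of_mem M0 hM0s] at h3
      · rw [map_sum, Finset.sum_eq_single_of_mem Ng hNgt] at h3
        · rw [Pd_homog_eq] at h3
          · exact h3
          · refine Hg.sub ?_ ?_
            · exact huMh.mul hvNh
            · have := hvNh.mul huMh
              rwa [Nat.add_comm] at this
        · intro p hp hpne
          have hup : Hg p (phi (K := K) (G p)) := Hg_of_eigen (hG p hp).2.2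
          have hple : p ≤ Ng := Finset.le_max' t p hp
          refine Pd_homog_ne (Hg.sub (huMh.mul hup) ?_) (by omega)
          have := hup.mul huMh
          rwa [Nat.add_comm] at this
      · intro n hn hnne
        have hnle : n ≤ M0 := Finset.le_max' s n hn
        have hun : Hg n (phi (K := K) (F n)) := Hg_of_eigen (hF n hn).2.2.2
        rw [map_sum]
        apply Finset.sum_eq_zero
        intro p hp
        have hup : Hg p (phi (K := K) (G p)) := Hg_of_eigen (hG p hp).2.2
        have hple : p ≤ Ng := Finset.le_max' t p hp
        refine Pd_homog_ne (Hg.sub (hun.mul hup) ?_) (by omega)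
        have := hup.mul hun
        rwa [Nat.add_comm] at this
    have hcomm : phi (K := K) (F M0) * phi (K := K) (G Ng)
        = phi (K := K) (G Ng) * phi (K := K) (F M0) := by
      rw [← sub_eq_zero]
      exact hkey
    -- case split
    by_cases hMN : M0 = Ng
    · -- equal top degrees: descend
      have hM0t : M0 ∈ t := by rw [hMN]; exact hNgt
      have hGNG : G M0 = G Ng := by rw [hMN]
      have hGN' := hG M0 hM0t
      have hvN' : phi (K := K) (G M0) ≠ 0 := fun hcon =>
        hGN'.1 (eigen_inj hGN'.2.1 hGN'.2.2 hcon)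
      have hvNh' : Hg M0 (phi (K := K) (G M0)) := Hg_of_eigen hGN'.2.2
      have hcomm' : phi (K := K) (F M0) * phi (K := K) (G M0)
          = phi (K := K) (G M0) * phi (K := K) (F M0) := by rw [hGNG]; exact hcomm
      obtain ⟨c, hc⟩ := prop_of_commute_homog huMh hvNh' hvN' hcomm'
      set H : ℕ → LL := fun n =>
        (if n ∈ s then F n else 0) - c • (if n ∈ t then G n else 0) with hH
      have hHsum : (∑ n ∈ s, F n) - c • g = ∑ n ∈ s ∪ t, H n := by
        rw [hH]
        rw [Finset.sum_sub_distrib]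
        rw [Finset.sum_ite_mem, Finset.union_inter_cancel_left]
        rw [← Finset.smul_sum, Finset.sum_ite_mem, Finset.union_inter_cancel_right]
        rw [hgsum]
      have hHM0 : H M0 = 0 := by
        have heig : NN (H M0) = (M0 : K) • H M0 := by
          rw [hH]
          simp only [hM0s, hM0t, if_true]
          rw [map_sub, map_smul, hFM.2.2.2, hGN'.2.2, smul_sub, smul_comm]
        have hphiH : phi (K := K) (H M0) = 0 := by
          rw [hH]
          simp only [hM0s, hM0t, if_true]
          rw [map_sub phi, map_smul phi, hc, sub_self]
        exact eigen_inj hFM.2.1 heig hphiH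
      have hsum2 : (∑ n ∈ s, F n) - c • g = ∑ n ∈ (s ∪ t).erase M0, H n := by
        rw [hHsum, ← Finset.sum_erase _ hHM0]
      -- apply IH with bound M0 - 1
      have hM0B : M0 ≤ B := hFM.2.2.1
      have hM01 : 1 ≤ M0 := hFM.2.1
      have hlt : M0 - 1 < B := by omega
      have hdec : ∃ (s' : Finset ℕ) (F' : ℕ → LL),
          ((∑ n ∈ s, F n) - c • g) = ∑ n ∈ s', F' n ∧
          ∀ n ∈ s', F' n ≠ 0 ∧ 1 ≤ n ∧ n ≤ M0 - 1 ∧ NN (F' n) = (n : K) • F' n := by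
        refine ⟨((s ∪ t).erase M0).filter (fun n => H n ≠ 0), H, ?_, ?_⟩
        · rw [hsum2, Finset.sum_filter_ne_zero]
        · intro n hn
          rw [Finset.mem_filter, Finset.mem_erase] at hn
          obtain ⟨⟨hne, hmem⟩, hHn⟩ := hn
          have h1n : 1 ≤ n := by
            rcases Finset.mem_union.mp hmem with h | h
            exacts [(hF n h).2.1, (hG n h).2.1]
          have hnM0 : n ≤ M0 := by
            rcases Finset.mem_union.mp hmem with h | h
            · exact Finset.le_max' s n h
            · have := Finset.le_max' t n h
              omega
          refine ⟨hHn, h1n, by omega, ?_⟩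
          rw [hH]
          rw [map_sub, map_smul, smul_sub]
          congr 1
          · by_cases h : n ∈ s
            · simp only [h, if_true]
              exact (hF n h).2.2.2
            · simp [h]
          · by_cases h : n ∈ t
            · simp only [h, if_true]
              rw [(hG n h).2.2, smul_comm]
            · simp [h]
      have hfg' : ⁅(∑ n ∈ s, F n) - c • g, g⁆ = 0 := by
        rw [sub_lie, hfg, smul_lie, lie_self, smul_zero, sub_zero]
      obtain ⟨α, hα⟩ := ih (M0 - 1) hlt ((∑ n ∈ s, F n) - c • g) hdec hfg'
      refine ⟨α + c, ?_⟩
      have : (∑ n ∈ s, F n) = ((∑ n ∈ s, F n) - c • g) + c • g := by abel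
      rw [this, hα, add_smul]
    · -- different top degrees: contradiction
      exfalso
      have hdvd : ¬ (Ng ∣ M0) ∨ ¬ (M0 ∣ Ng) := by
        by_contra h
        push_neg at h
        exact hMN (Nat.dvd_antisymm h.2 h.1)
      rcases hdvd with h | h
      · exact no_commute_prim hFM.2.1 hGN.2.1 h huMh hvNh huM hvN
          (Delta_prim (F M0)) (Delta_prim (G Ng)) hcomm
      · exact no_commute_prim hGN.2.1 hFM.2.1 h hvNh huMh hvN huM
          (Delta_prim (G Ng)) (Delta_prim (F M0)) hcomm.symm

theorem main (f g : LL) (h : ⁅f, g⁆ = 0) (hg : g ≠ 0) : ∃ α : K, f = α • g := by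
  classical
  obtain ⟨s, F, rfl, hF⟩ := decomp (K := K) f
  refine main_aux g hg (s.sup id) _ ⟨s, F, rfl, ?_⟩ h
  intro n hn
  obtain ⟨h1, h2, h3⟩ := hF n hn
  exact ⟨h1, h2, Finset.le_sup (f := id) hn, h3⟩

end FLBZ2

end

theorem free_lie_bracket_zero_proportional {K : Type*} [Field K] [CharZero K]
    (f g : FreeLieAlgebra K (Fin 2)) (h : ⁅f, g⁆ = 0) (hg : g ≠ 0) :
    ∃ α : K, f = α • g := by
  exact FLBZ2.main f g h hg
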